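/- Let A and B be Hopf algebras over ℂ with bijective antipodes S_A and S_B, and let ⟨·,·⟩ : A × B → ℂ be a bialgebra pairing compatible with the antipodes, i.e. ⟨S_A(a), b⟩ = ⟨a, S_B(b)⟩ for all a ∈ A, b ∈ B. Regard B as a left A-module algebra via a ▷ b = Σ b₍₁₎ ⟨a, b₍₂₎⟩ and A as a left B-module algebra via b ▷ a = Σ a₍₁₎ ⟨a₍₂₎, b⟩, and form the smash products B # A and A # B. Then the ℂ-linear bijection Φ : B ⊗ A → A ⊗ B defined by Φ(b ⊗ a) = S_A⁻¹(a) ⊗ S_B(b) is an anti-isomorphism: Φ(uv) = Φ(v)Φ(u) for all u, v ∈ B ⊗ A, where the products are the smash multiplications of B # A and A # B respectively. -/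

import Mathlib

open TensorProduct

open TensorProduct Coalgebra

namespace S14Aux

variable {R : Type*} [CommSemiring R]

section Conv

variable {C A' : Type*} [AddCommMonoid C] [Module R C] [Coalgebra R C]
  [AddCommMonoid A'] [Module R A']

lemma sum_counit_smul {ι : Type*} {c : C} (r : Coalgebra.Repr R c ι) :
    ∑ i ∈ r.index, Coalgebra.counit (R := R) (r.left i) • r.right i = c := by
  have h := Coalgebra.sum_counit_tmul_eq (R := R) r
  calc ∑ i ∈ r.index, Coalgebra.counit (R := R) (r.left i) • r.right i
      = TensorProduct.lid R C (∑ i ∈ r.index,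
          Coalgebra.counit (R := R) (r.left i) ⊗ₜ[R] r.right i) := by
        rw [map_sum]; simp
    _ = TensorProduct.lid R C ((1 : R) ⊗ₜ[R] c) := by rw [h]
    _ = c := by simp

lemma sum_smul_counit {ι : Type*} {c : C} (r : Coalgebra.Repr R c ι) :
    ∑ i ∈ r.index, Coalgebra.counit (R := R) (r.right i) • r.left i = c := by
  have h := Coalgebra.sum_tmul_counit_eq (R := R) r
  calc ∑ i ∈ r.index, Coalgebra.counit (R := R) (r.right i) • r.left i
      = TensorProduct.rid R C (∑ i ∈ r.index,
          r.left i ⊗ₜ[R] Coalgebra.counit (R := R) (r.right i)) := by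
        rw [map_sum]; simp
    _ = TensorProduct.rid R C (c ⊗ₜ[R] (1 : R)) := by rw [h]
    _ = c := by simp

variable (μ : A' →ₗ[R] A' →ₗ[R] A') (e : A')

/-- Convolution of two linear maps from a coalgebra to a module with bilinear product. -/
noncomputable def gconv (f g : C →ₗ[R] A') : C →ₗ[R] A' :=
  TensorProduct.lift μ ∘ₗ TensorProduct.map f g ∘ₗ Coalgebra.comul

/-- The convolution unit. -/
noncomputable def gunit : C →ₗ[R] A' :=
  LinearMap.toSpanSingleton R A' e ∘ₗ (Coalgebra.counit (R := R) : C →ₗ[R] R)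

lemma gunit_apply (c : C) : gunit (R := R) (C := C) e c = Coalgebra.counit (R := R) c • e := by
  simp [gunit]

lemma gconv_repr (f g : C →ₗ[R] A') {ι : Type*} {c : C} (r : Coalgebra.Repr R c ι) :
    gconv μ f g c = ∑ i ∈ r.index, μ (f (r.left i)) (g (r.right i)) := by
  simp [gconv, ← r.eq, map_sum]

lemma gconv_assoc (hassoc : ∀ x y z, μ (μ x y) z = μ x (μ y z)) (f g h : C →ₗ[R] A') :
    gconv μ (gconv μ f g) h = gconv μ f (gconv μ g h) := by
  ext c
  set r := ℛ R c with hr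
  set s : ∀ i, Coalgebra.Repr R (r.left i) (C × C) := fun i => ℛ R (r.left i) with hs
  set t : ∀ i, Coalgebra.Repr R (r.right i) (C × C) := fun i => ℛ R (r.right i) with ht
  have key := congrArg (TensorProduct.lift μ ∘ₗ
      (TensorProduct.map f (TensorProduct.lift μ ∘ₗ TensorProduct.map g h)))
    (Coalgebra.sum_tmul_tmul_eq r s t)
  simp only [map_sum, LinearMap.coe_comp, Function.comp_apply, TensorProduct.map_tmul,
    TensorProduct.lift.tmul] at key
  rw [gconv_repr μ _ h r, gconv_repr μ f _ r]
  calc ∑ i ∈ r.index, μ (gconv μ f g (r.left i)) (h (r.right i))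
      = ∑ i ∈ r.index, ∑ j ∈ (s i).index,
          μ (f ((s i).left j)) (μ (g ((s i).right j)) (h (r.right i))) := by
        refine Finset.sum_congr rfl fun i _ => ?_
        rw [gconv_repr μ f g (s i), map_sum, LinearMap.sum_apply]
        exact Finset.sum_congr rfl fun j _ => hassoc _ _ _
    _ = ∑ i ∈ r.index, ∑ j ∈ (t i).index,
          μ (f (r.left i)) (μ (g ((t i).left j)) (h ((t i).right j))) := key
    _ = ∑ i ∈ r.index, μ (f (r.left i)) (gconv μ g h (r.right i)) := by
        refine Finset.sum_congr rfl fun i _ => ?_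
        rw [gconv_repr μ g h (t i), map_sum]

lemma gconv_gunit_left (hone : ∀ x, μ e x = x) (f : C →ₗ[R] A') :
    gconv μ (gunit e) f = f := by
  ext c
  rw [gconv_repr μ _ f (ℛ R c)]
  simp only [gunit_apply, map_smul, LinearMap.smul_apply, hone]
  calc ∑ i ∈ (ℛ R c).index, Coalgebra.counit (R := R) ((ℛ R c).left i) • f ((ℛ R c).right i)
      = f (∑ i ∈ (ℛ R c).index, Coalgebra.counit (R := R) ((ℛ R c).left i) • (ℛ R c).right i) := by
        rw [map_sum]; exact Finset.sum_congr rfl fun i _ => (map_smul f _ _).symm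
    _ = f c := by rw [sum_counit_smul]

lemma gconv_gunit_right (hone : ∀ x, μ x e = x) (f : C →ₗ[R] A') :
    gconv μ f (gunit e) = f := by
  ext c
  rw [gconv_repr μ f _ (ℛ R c)]
  simp only [gunit_apply, map_smul, hone]
  calc ∑ i ∈ (ℛ R c).index, Coalgebra.counit (R := R) ((ℛ R c).right i) • f ((ℛ R c).left i)
      = f (∑ i ∈ (ℛ R c).index, Coalgebra.counit (R := R) ((ℛ R c).right i) • (ℛ R c).left i) := by
        rw [map_sum]; exact Finset.sum_congr rfl fun i _ => (map_smul f _ _).symm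
    _ = f c := by rw [sum_smul_counit]

lemma gconv_cancel (hassoc : ∀ x y z, μ (μ x y) z = μ x (μ y z))
    (hone : ∀ x, μ e x = x) (hone' : ∀ x, μ x e = x)
    {P M Q : C →ₗ[R] A'} (h1 : gconv μ P M = gunit e) (h2 : gconv μ M Q = gunit e) :
    P = Q := by
  calc P = gconv μ P (gunit e) := (gconv_gunit_right μ e hone' P).symm
    _ = gconv μ P (gconv μ M Q) := by rw [h2]
    _ = gconv μ (gconv μ P M) Q := (gconv_assoc μ hassoc P M Q).symm
    _ = gconv μ (gunit e) Q := by rw [h1]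
    _ = Q := gconv_gunit_left μ e hone Q

end Conv

section Hopf

variable {R H : Type*} [CommSemiring R] [Semiring H] [HopfAlgebra R H]

local notation "𝒮" => HopfAlgebra.antipode (R := R) (A := H)

/-- Curried convolution on `H →ₗ[R] H`. -/
noncomputable def convL : (H →ₗ[R] H) →ₗ[R] (H →ₗ[R] H) →ₗ[R] (H →ₗ[R] H) :=
  LinearMap.mk₂ R (fun f g => gconv (LinearMap.mul R H) f g)
    (fun f f' g => by ext c; simp [gconv, TensorProduct.map_add_left])
    (fun c f g => by ext x; simp [gconv, TensorProduct.map_smul_left])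
    (fun f g g' => by ext c; simp [gconv, TensorProduct.map_add_right])
    (fun c f g => by ext x; simp [gconv, TensorProduct.map_smul_right])

lemma convL_apply (f g : H →ₗ[R] H) : convL f g = gconv (LinearMap.mul R H) f g := rfl

lemma mulH_assoc : ∀ x y z : H, LinearMap.mul R H (LinearMap.mul R H x y) z
    = LinearMap.mul R H x (LinearMap.mul R H y z) := fun x y z => by
  simp [LinearMap.mul_apply', mul_assoc]

lemma mulH_one_left : ∀ x : H, LinearMap.mul R H 1 x = x := fun x => by
  simp [LinearMap.mul_apply']

lemma mulH_one_right : ∀ x : H, LinearMap.mul R H x 1 = x := fun x => by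
  simp [LinearMap.mul_apply']

/-- Anti-multiplicativity of the antipode. -/
lemma antipode_mul (a b : H) : 𝒮 (a * b) = 𝒮 b * 𝒮 a := by
  -- curried maps
  set Pc : H →ₗ[R] H →ₗ[R] H := LinearMap.mk₂ R (fun a b => 𝒮 (a * b))
    (fun a a' b => by simp [add_mul]) (fun c a b => by simp [smul_mul_assoc])
    (fun a b b' => by simp [mul_add]) (fun c a b => by simp [mul_smul_comm]) with hPc
  set Qc : H →ₗ[R] H →ₗ[R] H := LinearMap.mk₂ R (fun a b => 𝒮 b * 𝒮 a)
    (fun a a' b => by simp [mul_add]) (fun c a b => by simp [mul_smul_comm])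
    (fun a b b' => by simp [add_mul]) (fun c a b => by simp [smul_mul_assoc]) with hQc
  set Mc : H →ₗ[R] H →ₗ[R] H := LinearMap.mul R H with hMc
  set e₁ : H →ₗ[R] H := gunit (R := R) (C := H) (1 : H) with he₁
  have hcongr : Pc = Qc := by
    refine gconv_cancel (M := Mc) convL e₁
      (fun f g h => gconv_assoc (LinearMap.mul R H) mulH_assoc f g h)
      (fun f => gconv_gunit_left (LinearMap.mul R H) 1 mulH_one_left f)
      (fun f => gconv_gunit_right (LinearMap.mul R H) 1 mulH_one_right f) ?_ ?_
    · -- gconv convL Pc Mc = gunit e₁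
      ext x y
      set ra := ℛ R x
      set rb := ℛ R y
      rw [gconv_repr convL Pc Mc ra]
      have expand : ∀ i, convL (Pc (ra.left i)) (Mc (ra.right i)) y
          = ∑ j ∈ rb.index, 𝒮 (ra.left i * rb.left j) * (ra.right i * rb.right j) := by
        intro i
        rw [convL_apply, gconv_repr _ _ _ rb]
        simp [hPc, hMc]
      -- product representation of x * y
      set rab : Coalgebra.Repr R (x * y) ((H × H) × (H × H)) :=
        { index := ra.index ×ˢ rb.index
          left := fun p => ra.left p.1 * rb.left p.2
          right := fun p => ra.right p.1 * rb.right p.2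
          eq := by
            rw [Finset.sum_product]
            rw [Bialgebra.comul_mul, ← ra.eq, ← rb.eq, Finset.sum_mul_sum]
            simp [Algebra.TensorProduct.tmul_mul_tmul] } with hrab
      have key := HopfAlgebra.sum_antipode_mul_eq_smul (R := R) rab
      rw [hrab] at key
      simp only [Finset.sum_product] at key
      calc (∑ i ∈ ra.index, convL (Pc (ra.left i)) (Mc (ra.right i))) y
          = ∑ i ∈ ra.index, ∑ j ∈ rb.index,
              𝒮 (ra.left i * rb.left j) * (ra.right i * rb.right j) := by
            rw [LinearMap.sum_apply]
            exact Finset.sum_congr rfl fun i _ => expand i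
        _ = Coalgebra.counit (R := R) (x * y) • (1 : H) := key
        _ = gunit (R := R) (C := H) e₁ x y := by
            rw [gunit_apply]
            simp [he₁, gunit_apply, Bialgebra.counit_mul, mul_smul]
    · -- gconv convL Mc Qc = gunit e₁
      ext x y
      set ra := ℛ R x
      set rb := ℛ R y
      rw [gconv_repr convL Mc Qc ra]
      have expand : ∀ i, convL (Mc (ra.left i)) (Qc (ra.right i)) y
          = ∑ j ∈ rb.index, (ra.left i * rb.left j) * (𝒮 (rb.right j) * 𝒮 (ra.right i)) := by
        intro i
        rw [convL_apply, gconv_repr _ _ _ rb]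
        simp [hQc, hMc]
      have inner : ∀ i, ∑ j ∈ rb.index,
          (ra.left i * rb.left j) * (𝒮 (rb.right j) * 𝒮 (ra.right i))
          = Coalgebra.counit (R := R) y • (ra.left i * 𝒮 (ra.right i)) := by
        intro i
        calc ∑ j ∈ rb.index, (ra.left i * rb.left j) * (𝒮 (rb.right j) * 𝒮 (ra.right i))
            = ra.left i * ((∑ j ∈ rb.index, rb.left j * 𝒮 (rb.right j)) * 𝒮 (ra.right i)) := by
              rw [Finset.sum_mul, Finset.mul_sum]
              exact Finset.sum_congr rfl fun j _ => by simp [mul_assoc]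
          _ = Coalgebra.counit (R := R) y • (ra.left i * 𝒮 (ra.right i)) := by
              rw [HopfAlgebra.sum_mul_antipode_eq_smul rb]
              rw [smul_mul_assoc, one_mul, mul_smul_comm]
      calc (∑ i ∈ ra.index, convL (Mc (ra.left i)) (Qc (ra.right i))) y
          = ∑ i ∈ ra.index, Coalgebra.counit (R := R) y • (ra.left i * 𝒮 (ra.right i)) := by
            rw [LinearMap.sum_apply]
            exact Finset.sum_congr rfl fun i _ => (expand i).trans (inner i)
        _ = Coalgebra.counit (R := R) y •
              ∑ i ∈ ra.index, ra.left i * 𝒮 (ra.right i) := by rw [Finset.smul_sum]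
        _ = gunit (R := R) (C := H) e₁ x y := by
            rw [HopfAlgebra.sum_mul_antipode_eq_smul ra, gunit_apply]
            simp [he₁, gunit_apply, smul_smul, mul_comm]
  have := congrArg (fun F : H →ₗ[R] H →ₗ[R] H => F a b) hcongr
  simpa [hPc, hQc] using this


/-- `comm ∘ (S ⊗ S) ∘ Δ = Δ ∘ S`. -/
lemma comul_antipode :
    (TensorProduct.comm R H H).toLinearMap ∘ₗ TensorProduct.map 𝒮 𝒮 ∘ₗ
        (Coalgebra.comul (R := R) (A := H))
      = (Coalgebra.comul (R := R) (A := H)) ∘ₗ 𝒮 := by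
  set μ₂ : (H ⊗[R] H) →ₗ[R] (H ⊗[R] H) →ₗ[R] (H ⊗[R] H) := LinearMap.mul R (H ⊗[R] H) with hμ₂
  set Pd : H →ₗ[R] H ⊗[R] H := (TensorProduct.comm R H H).toLinearMap ∘ₗ
      TensorProduct.map 𝒮 𝒮 ∘ₗ (Coalgebra.comul (R := R) (A := H)) with hPd
  set Md : H →ₗ[R] H ⊗[R] H := Coalgebra.comul (R := R) (A := H) with hMd
  set Qd : H →ₗ[R] H ⊗[R] H := (Coalgebra.comul (R := R) (A := H)) ∘ₗ 𝒮 with hQd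
  refine gconv_cancel (M := Md) μ₂ 1
    (fun x y z => by simp [hμ₂, mul_assoc])
    (fun x => by simp [hμ₂]) (fun x => by simp [hμ₂]) ?_ ?_
  · -- hard side : gconv μ₂ Pd Md = gunit 1
    ext x
    set r := ℛ R x with hr
    set s : ∀ i, Coalgebra.Repr R (r.left i) (H × H) := fun i => ℛ R (r.left i) with hs
    set t : ∀ i, Coalgebra.Repr R (r.right i) (H × H) := fun i => ℛ R (r.right i) with ht
    set T : H ⊗[R] (H ⊗[R] H) →ₗ[R] H ⊗[R] H :=
      LinearMap.mul' R (H ⊗[R] H) ∘ₗ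
        TensorProduct.map ((TensorProduct.comm R H H).toLinearMap ∘ₗ TensorProduct.map 𝒮 𝒮)
          (Coalgebra.comul (R := R) (A := H)) ∘ₗ
        (TensorProduct.assoc R H H H).symm.toLinearMap with hT
    have hTapp : ∀ p q w : H, T (p ⊗ₜ[R] (q ⊗ₜ[R] w))
        = (𝒮 q ⊗ₜ[R] 𝒮 p) * Coalgebra.comul (R := R) w := by
      intro p q w
      simp [hT]
    have stepA : gconv μ₂ Pd Md x
        = ∑ i ∈ r.index, ∑ k ∈ (t i).index,
            (𝒮 ((t i).left k) ⊗ₜ[R] 𝒮 (r.left i)) * Coalgebra.comul (R := R) ((t i).right k) := by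
      have key := congrArg T (Coalgebra.sum_tmul_tmul_eq r s t)
      simp only [map_sum, hTapp] at key
      rw [gconv_repr μ₂ Pd Md r]
      rw [← key]
      refine Finset.sum_congr rfl fun i _ => ?_
      have hPdi : Pd (r.left i) = ∑ j ∈ (s i).index,
          𝒮 ((s i).right j) ⊗ₜ[R] 𝒮 ((s i).left j) := by
        simp only [hPd, LinearMap.coe_comp, Function.comp_apply, LinearEquiv.coe_coe]
        rw [← (s i).eq]
        simp [map_sum]
      rw [hPdi, hμ₂, LinearMap.mul_apply']
      rw [Finset.sum_mul]
    have stepB : ∀ i, ∑ k ∈ (t i).index,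
        (𝒮 ((t i).left k) ⊗ₜ[R] 𝒮 (r.left i)) * Coalgebra.comul (R := R) ((t i).right k)
        = (1 : H) ⊗ₜ[R] (𝒮 (r.left i) * r.right i) := by
      intro i
      set v : ∀ k, Coalgebra.Repr R ((t i).left k) (H × H) := fun k => ℛ R ((t i).left k) with hv
      set u : ∀ k, Coalgebra.Repr R ((t i).right k) (H × H) := fun k => ℛ R ((t i).right k) with hu
      set U : H ⊗[R] (H ⊗[R] H) →ₗ[R] H ⊗[R] H :=
        TensorProduct.map (LinearMap.mul' R H ∘ₗ LinearMap.rTensor H 𝒮)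
            (LinearMap.mulLeft R (𝒮 (r.left i))) ∘ₗ
          (TensorProduct.assoc R H H H).symm.toLinearMap with hU
      have hUapp : ∀ p q w : H, U (p ⊗ₜ[R] (q ⊗ₜ[R] w))
          = (𝒮 p * q) ⊗ₜ[R] (𝒮 (r.left i) * w) := by
        intro p q w
        simp [hU]
      have key := congrArg U (Coalgebra.sum_tmul_tmul_eq (t i) v u)
      simp only [map_sum, hUapp] at key
      have rhs_eq : ∀ k, (𝒮 ((t i).left k) ⊗ₜ[R] 𝒮 (r.left i)) *
          Coalgebra.comul (R := R) ((t i).right k)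
          = ∑ j ∈ (u k).index, (𝒮 ((t i).left k) * (u k).left j) ⊗ₜ[R]
              (𝒮 (r.left i) * (u k).right j) := by
        intro k
        rw [← (u k).eq, Finset.mul_sum]
        simp [Algebra.TensorProduct.tmul_mul_tmul]
      have lhs_eq : ∀ k, ∑ j ∈ (v k).index,
          (𝒮 ((v k).left j) * (v k).right j) ⊗ₜ[R] (𝒮 (r.left i) * (t i).right k)
          = Coalgebra.counit (R := R) ((t i).left k) •
              ((1 : H) ⊗ₜ[R] (𝒮 (r.left i) * (t i).right k)) := by
        intro k
        rw [← TensorProduct.sum_tmul, HopfAlgebra.sum_antipode_mul_eq_smul (v k)]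
        rw [TensorProduct.smul_tmul']
      calc ∑ k ∈ (t i).index,
            (𝒮 ((t i).left k) ⊗ₜ[R] 𝒮 (r.left i)) * Coalgebra.comul (R := R) ((t i).right k)
          = ∑ k ∈ (t i).index, ∑ j ∈ (u k).index, (𝒮 ((t i).left k) * (u k).left j) ⊗ₜ[R]
              (𝒮 (r.left i) * (u k).right j) := Finset.sum_congr rfl fun k _ => rhs_eq k
        _ = ∑ k ∈ (t i).index, ∑ j ∈ (v k).index,
              (𝒮 ((v k).left j) * (v k).right j) ⊗ₜ[R] (𝒮 (r.left i) * (t i).right k) := key.symm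
        _ = ∑ k ∈ (t i).index, Coalgebra.counit (R := R) ((t i).left k) •
              ((1 : H) ⊗ₜ[R] (𝒮 (r.left i) * (t i).right k)) :=
            Finset.sum_congr rfl fun k _ => lhs_eq k
        _ = (1 : H) ⊗ₜ[R] (𝒮 (r.left i) *
              ∑ k ∈ (t i).index, Coalgebra.counit (R := R) ((t i).left k) • (t i).right k) := by
            rw [Finset.mul_sum, TensorProduct.tmul_sum]
            exact Finset.sum_congr rfl fun k _ => by
              rw [mul_smul_comm, TensorProduct.tmul_smul]
        _ = (1 : H) ⊗ₜ[R] (𝒮 (r.left i) * r.right i) := by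
            rw [sum_counit_smul (t i)]
    rw [stepA, Finset.sum_congr rfl (fun i _ => stepB i)]
    calc ∑ i ∈ r.index, (1 : H) ⊗ₜ[R] (𝒮 (r.left i) * r.right i)
        = (1 : H) ⊗ₜ[R] (∑ i ∈ r.index, 𝒮 (r.left i) * r.right i) :=
          (TensorProduct.tmul_sum _ _ _).symm
      _ = (1 : H) ⊗ₜ[R] (Coalgebra.counit (R := R) x • (1 : H)) := by
          rw [HopfAlgebra.sum_antipode_mul_eq_smul r]
      _ = gunit (R := R) (1 : H ⊗[R] H) x := by
          rw [gunit_apply, TensorProduct.tmul_smul, Algebra.TensorProduct.one_def]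
  · -- easy side : gconv μ₂ Md Qd = gunit 1
    ext x
    set r := ℛ R x with hr
    rw [gconv_repr μ₂ Md Qd r]
    have : ∀ i ∈ r.index, μ₂ (Md (r.left i)) (Qd (r.right i))
        = Coalgebra.comul (R := R) (r.left i * 𝒮 (r.right i)) := by
      intro i _
      simp [hμ₂, hMd, hQd, Bialgebra.comul_mul]
    rw [Finset.sum_congr rfl this, ← map_sum, HopfAlgebra.sum_mul_antipode_eq_smul r]
    simp [gunit_apply]

lemma comul_antipode_repr {ι : Type*} {x : H} (r : Coalgebra.Repr R x ι) :
    Coalgebra.comul (R := R) (𝒮 x) = ∑ i ∈ r.index, 𝒮 (r.right i) ⊗ₜ[R] 𝒮 (r.left i) := by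
  have h := congrArg (fun F : H →ₗ[R] H ⊗[R] H => F x) comul_antipode
  simp only [LinearMap.coe_comp, Function.comp_apply, LinearEquiv.coe_coe] at h
  rw [← h, ← r.eq]
  simp [map_sum]

variable (S' : H →ₗ[R] H) (hl : ∀ a : H, S' (HopfAlgebra.antipode (R := R) a) = a)
  (hr : ∀ a : H, HopfAlgebra.antipode (R := R) (S' a) = a)

include hl hr

lemma inv_antipode_mul (x y : H) : S' (x * y) = S' y * S' x := by
  have h1 : x * y = 𝒮 (S' y * S' x) := by rw [antipode_mul, hr, hr]
  rw [h1, hl]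

lemma comul_inv_antipode {ι : Type*} {x : H} (r : Coalgebra.Repr R x ι) :
    Coalgebra.comul (R := R) (S' x) = ∑ i ∈ r.index, S' (r.right i) ⊗ₜ[R] S' (r.left i) := by
  have h := congrArg (fun F : H →ₗ[R] H ⊗[R] H => F (S' x)) comul_antipode
  simp only [LinearMap.coe_comp, Function.comp_apply, LinearEquiv.coe_coe] at h
  rw [hr] at h
  have hid : TensorProduct.map S' S' ∘ₗ TensorProduct.map 𝒮 𝒮
      = (LinearMap.id : H ⊗[R] H →ₗ[R] H ⊗[R] H) := by
    rw [← TensorProduct.map_comp]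
    have h1 : S' ∘ₗ 𝒮 = (LinearMap.id : H →ₗ[R] H) := LinearMap.ext hl
    rw [h1, TensorProduct.map_id]
  have h2 : TensorProduct.map S' S'
      ((TensorProduct.comm R H H).symm (Coalgebra.comul (R := R) x))
      = Coalgebra.comul (R := R) (S' x) := by
    rw [← h, (TensorProduct.comm R H H).symm_apply_apply]
    exact LinearMap.congr_fun hid _
  rw [← h2, ← r.eq]
  simp [map_sum]

end Hopf

end S14Aux



/-- For Hopf algebras `A`, `B` with bijective antipodes and an
antipode-compatible bialgebra pairing, the map `Φ(b ⊗ a) = S_A⁻¹(a) ⊗ S_B(b)` is a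
bijective anti-isomorphism from the smash product `B # A` to the smash product
`A # B`. -/
theorem stmt_14 {A B : Type*} [Ring A] [HopfAlgebra ℂ A] [Ring B] [HopfAlgebra ℂ B]
    (SA' : A →ₗ[ℂ] A)
    (hSA'l : ∀ a : A, SA' (HopfAlgebra.antipode (R := ℂ) a) = a)
    (hSA'r : ∀ a : A, HopfAlgebra.antipode (R := ℂ) (SA' a) = a)
    (SB' : B →ₗ[ℂ] B)
    (hSB'l : ∀ b : B, SB' (HopfAlgebra.antipode (R := ℂ) b) = b)
    (hSB'r : ∀ b : B, HopfAlgebra.antipode (R := ℂ) (SB' b) = b)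
    (pair : A →ₗ[ℂ] B →ₗ[ℂ] ℂ)
    (hpair_mulA : ∀ (a a' : A) (b : B),
      pair (a * a') b =
        LinearMap.mul' ℂ ℂ
          (TensorProduct.map (pair a) (pair a') (Coalgebra.comul (R := ℂ) b)))
    (hpair_mulB : ∀ (a : A) (b b' : B),
      pair a (b * b') =
        LinearMap.mul' ℂ ℂ
          (TensorProduct.map (pair.flip b) (pair.flip b') (Coalgebra.comul (R := ℂ) a)))
    (hpair_oneA : ∀ b : B, pair 1 b = Coalgebra.counit (R := ℂ) b)
    (hpair_oneB : ∀ a : A, pair a 1 = Coalgebra.counit (R := ℂ) a)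
    (hpair_antipode : ∀ (a : A) (b : B),
      pair (HopfAlgebra.antipode (R := ℂ) a) b = pair a (HopfAlgebra.antipode (R := ℂ) b))
    (actAB : A →ₗ[ℂ] B →ₗ[ℂ] B)
    (hactAB : ∀ (a : A) (b : B),
      actAB a b =
        (TensorProduct.rid ℂ B)
          (TensorProduct.map LinearMap.id (pair a) (Coalgebra.comul (R := ℂ) b)))
    (actBA : B →ₗ[ℂ] A →ₗ[ℂ] A)
    (hactBA : ∀ (b : B) (a : A),
      actBA b a =
        (TensorProduct.rid ℂ A)
          (TensorProduct.map LinearMap.id (pair.flip b) (Coalgebra.comul (R := ℂ) a)))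
    (mulBA : (B ⊗[ℂ] A) →ₗ[ℂ] (B ⊗[ℂ] A) →ₗ[ℂ] (B ⊗[ℂ] A))
    (hmulBA : ∀ (b : B) (a : A) (b' : B) (a' : A),
      mulBA (b ⊗ₜ[ℂ] a) (b' ⊗ₜ[ℂ] a') =
        TensorProduct.map ((LinearMap.mulLeft ℂ b).comp (actAB.flip b'))
          (LinearMap.mulRight ℂ a') (Coalgebra.comul (R := ℂ) a))
    (mulAB : (A ⊗[ℂ] B) →ₗ[ℂ] (A ⊗[ℂ] B) →ₗ[ℂ] (A ⊗[ℂ] B))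
    (hmulAB : ∀ (a : A) (b : B) (a' : A) (b' : B),
      mulAB (a ⊗ₜ[ℂ] b) (a' ⊗ₜ[ℂ] b') =
        TensorProduct.map ((LinearMap.mulLeft ℂ a).comp (actBA.flip a'))
          (LinearMap.mulRight ℂ b') (Coalgebra.comul (R := ℂ) b))
    (Φ : (B ⊗[ℂ] A) →ₗ[ℂ] (A ⊗[ℂ] B))
    (hΦ : ∀ (b : B) (a : A),
      Φ (b ⊗ₜ[ℂ] a) = SA' a ⊗ₜ[ℂ] HopfAlgebra.antipode (R := ℂ) b) :
    Function.Bijective Φ ∧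
      ∀ u v : B ⊗[ℂ] A, Φ (mulBA u v) = mulAB (Φ v) (Φ u) := by
  
  classical
  constructor
  · -- bijectivity
    set Ψ : (A ⊗[ℂ] B) →ₗ[ℂ] (B ⊗[ℂ] A) :=
      (TensorProduct.map SB' (HopfAlgebra.antipode (R := ℂ))) ∘ₗ
        (TensorProduct.comm ℂ A B).toLinearMap with hΨ
    have hleft : ∀ u : B ⊗[ℂ] A, Ψ (Φ u) = u := by
      have : Ψ ∘ₗ Φ = LinearMap.id := by
        apply TensorProduct.ext'
        intro b a
        simp [hΨ, hΦ, hSB'l, hSA'r]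
      intro u
      exact LinearMap.congr_fun this u
    have hright : ∀ u : A ⊗[ℂ] B, Φ (Ψ u) = u := by
      have : Φ ∘ₗ Ψ = LinearMap.id := by
        apply TensorProduct.ext'
        intro x y
        simp [hΨ, hΦ, hSA'l, hSB'r]
      intro u
      exact LinearMap.congr_fun this u
    exact Function.bijective_iff_has_inverse.mpr ⟨Ψ, hleft, hright⟩
  · -- anti-multiplicativity
    have hp : ∀ (u : A) (v : B),
        pair (SA' u) (HopfAlgebra.antipode (R := ℂ) v) = pair u v := by
      intro u v
      rw [← hpair_antipode (SA' u) v, hSA'r]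
    have key : ∀ (b : B) (a : A) (b' : B) (a' : A),
        Φ (mulBA (b ⊗ₜ[ℂ] a) (b' ⊗ₜ[ℂ] a')) = mulAB (Φ (b' ⊗ₜ[ℂ] a')) (Φ (b ⊗ₜ[ℂ] a)) := by
      intro b a b' a'
      set ra := Coalgebra.Repr.arbitrary ℂ a with hra
      set rb := Coalgebra.Repr.arbitrary ℂ b' with hrb
      have step1 : mulBA (b ⊗ₜ[ℂ] a) (b' ⊗ₜ[ℂ] a')
          = ∑ i ∈ ra.index, (b * actAB (ra.left i) b') ⊗ₜ[ℂ] (ra.right i * a') := by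
        rw [hmulBA, ← ra.eq, map_sum]
        refine Finset.sum_congr rfl fun i _ => ?_
        simp
      have step2 : ∀ i, actAB (ra.left i) b'
          = ∑ j ∈ rb.index, pair (ra.left i) (rb.right j) • rb.left j := by
        intro i
        rw [hactAB, ← rb.eq, map_sum, map_sum]
        refine Finset.sum_congr rfl fun j _ => ?_
        simp
      have lhs_eq : Φ (mulBA (b ⊗ₜ[ℂ] a) (b' ⊗ₜ[ℂ] a'))
          = ∑ i ∈ ra.index, ∑ j ∈ rb.index, pair (ra.left i) (rb.right j) •
              ((SA' a' * SA' (ra.right i)) ⊗ₜ[ℂ]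
                (HopfAlgebra.antipode (R := ℂ) (rb.left j) * HopfAlgebra.antipode (R := ℂ) b)) := by
        rw [step1, map_sum]
        refine Finset.sum_congr rfl fun i _ => ?_
        have hbsum : b * actAB (ra.left i) b'
            = ∑ j ∈ rb.index, pair (ra.left i) (rb.right j) • (b * rb.left j) := by
          rw [step2 i, Finset.mul_sum]
          exact Finset.sum_congr rfl fun j _ => mul_smul_comm _ _ _
        rw [hbsum, TensorProduct.sum_tmul, map_sum]
        refine Finset.sum_congr rfl fun j _ => ?_
        rw [← TensorProduct.smul_tmul', map_smul, hΦ]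
        rw [S14Aux.inv_antipode_mul SA' hSA'l hSA'r, S14Aux.antipode_mul]
      have rhs_eq : mulAB (Φ (b' ⊗ₜ[ℂ] a')) (Φ (b ⊗ₜ[ℂ] a))
          = ∑ j ∈ rb.index, ∑ i ∈ ra.index, pair (ra.left i) (rb.right j) •
              ((SA' a' * SA' (ra.right i)) ⊗ₜ[ℂ]
                (HopfAlgebra.antipode (R := ℂ) (rb.left j) * HopfAlgebra.antipode (R := ℂ) b)) := by
        rw [hΦ, hΦ, hmulAB]
        rw [S14Aux.comul_antipode_repr rb, map_sum]
        refine Finset.sum_congr rfl fun j _ => ?_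
        have hact : actBA (HopfAlgebra.antipode (R := ℂ) (rb.right j)) (SA' a)
            = ∑ i ∈ ra.index, pair (ra.left i) (rb.right j) • SA' (ra.right i) := by
          rw [hactBA, S14Aux.comul_inv_antipode SA' hSA'l hSA'r ra, map_sum, map_sum]
          refine Finset.sum_congr rfl fun i _ => ?_
          simp [hp]
        have hmul : SA' a' * actBA (HopfAlgebra.antipode (R := ℂ) (rb.right j)) (SA' a)
            = ∑ i ∈ ra.index, pair (ra.left i) (rb.right j) • (SA' a' * SA' (ra.right i)) := by
          rw [hact, Finset.mul_sum]
          exact Finset.sum_congr rfl fun i _ => mul_smul_comm _ _ _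
        simp only [TensorProduct.map_tmul, LinearMap.coe_comp, Function.comp_apply,
          LinearMap.flip_apply, LinearMap.mulLeft_apply, LinearMap.mulRight_apply]
        rw [hmul, TensorProduct.sum_tmul]
        exact Finset.sum_congr rfl fun i _ => (TensorProduct.smul_tmul' _ _ _).symm
      rw [lhs_eq, rhs_eq, Finset.sum_comm]
    intro u v
    induction u using TensorProduct.induction_on with
    | zero => simp
    | tmul b a =>
      induction v using TensorProduct.induction_on with
      | zero => simp
      | tmul b' a' => exact key b a b' a'
      | add v1 v2 h1 h2 => simp only [map_add, LinearMap.add_apply, h1, h2]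
    | add u1 u2 h1 h2 => simp only [map_add, LinearMap.add_apply, h1, h2]
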